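/- The composition tableau T(∞) is semistandard for the order ≼: its entries strictly ≼-increase down each column, weakly ≼-decrease along each row on going from left to right, and no column of T(∞) contains a gap (an empty box with a filled box above it and a filled box below it in the same column). -/

import Mathlib

open scoped Classical

/-- height of column `j` of the diagram (columns numbered from 1). -/
def hgt (c : List ℕ) (j : ℕ) : ℕ := c.getD (j - 1) 0

/-- number of boxes in the columns strictly to the left of column `j`. -/
def off (c : List ℕ) (j : ℕ) : ℕ := (c.take (j - 1)).sum

/-- `(i, j)` (row `i`, column `j`) is a box of the diagram `D`. -/
def IsBox (c : List ℕ) (i j : ℕ) : Prop :=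
  1 ≤ j ∧ j ≤ c.length ∧ 1 ≤ i ∧ i ≤ hgt c j

/-- the entry of the box `(i, j)` in the tableau `T`. -/
def Tentry (c : List ℕ) (i j : ℕ) : ℕ := off c j + i

/-- the column of the box of `D` carrying entry `m` in `T`. -/
noncomputable def colOf (c : List ℕ) (m : ℕ) : ℕ := sInf {j | m ≤ (c.take j).sum}

/-- the row of the box of `D` carrying entry `m` in `T`. -/
noncomputable def rowOf (c : List ℕ) (m : ℕ) : ℕ := m - off c (colOf c m)

/-- the total order `≼` on entries: increasing down columns, then from right to left. -/
def ple (c : List ℕ) (a b : ℕ) : Prop :=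
  colOf c b < colOf c a ∨ (colOf c a = colOf c b ∧ a ≤ b)

/-- the strict version of `≼`. -/
def plt (c : List ℕ) (a b : ℕ) : Prop :=
  colOf c b < colOf c a ∨ (colOf c a = colOf c b ∧ a < b)

/-- column `j` has a left neighbour in `D`. -/
def HasLeftNb (c : List ℕ) (j : ℕ) : Prop :=
  ∃ i, 1 ≤ i ∧ i < j ∧ hgt c i = hgt c j ∧
    ∀ i', i < i' → i' < j → hgt c i' ≠ hgt c j

/-- the `j`-th column of the tableau `T`, rows to optional entries. -/
def Tcol (c : List ℕ) (j : ℕ) : ℕ → Option ℕ := fun i =>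
  if 1 ≤ i ∧ i ≤ hgt c j then some (Tentry c i j) else none

/-- one step of the propagation rule building `T(∞)`: the entry (if any) in row `t`
of column `j - 1` of `T(∞)` (given by `prev`) is propagated into the partially
built column `j` (given by `cur`). -/
noncomputable def propStep (c : List ℕ) (j : ℕ) (prev : ℕ → Option ℕ)
    (cur : ℕ → Option ℕ) (t : ℕ) : ℕ → Option ℕ :=
  match prev t with
  | none => cur
  | some l =>
    if hgt c j = t then
      if HasLeftNb c j ∧ cur (t + 1) = none then
        Function.update cur (t + 1) (some l)
      else cur
    else
      if cur t = none then Function.update cur t (some l) else cur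

/-- the `j`-th column of the composition tableau `T(∞)`. -/
noncomputable def TinfCol (c : List ℕ) : ℕ → ℕ → Option ℕ
  | 0 => fun _ => none
  | 1 => Tcol c 1
  | j + 2 =>
      (List.range (c.sum + 2)).foldl
        (propStep c (j + 2) (TinfCol c (j + 1))) (Tcol c (j + 2))

/-- labels of lines: `1` or `∗`. -/
inductive Lab : Type
  | one : Lab
  | star : Lab
deriving DecidableEq

/-- maximal height among the columns `1, …, j - 1`. -/
def maxHgt (c : List ℕ) (j : ℕ) : ℕ := (c.take (j - 1)).foldr max 0

/-- the maximal column height of the diagram `D`. -/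
def maxH (c : List ℕ) : ℕ := c.foldr max 0

/-- `LineB c a i j lab` : the line family `ℓ(D)` contains a line labelled `lab`
whose left end-point is the box of `D` carrying entry `a` in `T` and whose right
end-point is the box `(i, j)` (row `i` of column `C_j`). -/
def LineB (c : List ℕ) (a i j : ℕ) (lab : Lab) : Prop :=
  2 ≤ j ∧ j ≤ c.length ∧ 1 ≤ i ∧
    (match lab with
     | Lab.one =>
         (maxHgt c j < hgt c j ∧ i ≤ maxHgt c j + 1 ∧ TinfCol c (j - 1) i = some a)
       ∨ (hgt c j ≤ maxHgt c j ∧ i + 1 ≤ hgt c j ∧ TinfCol c (j - 1) i = some a)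
       ∨ (hgt c j ≤ maxHgt c j ∧ i = hgt c j ∧
           ¬(∃ j', 1 ≤ j' ∧ j' < j ∧ hgt c j' = hgt c j) ∧
           TinfCol c (j - 1) i = some a)
       ∨ (hgt c j ≤ maxHgt c j ∧ i = hgt c j ∧
           (∃ j', 1 ≤ j' ∧ j' < j ∧ hgt c j' = hgt c j) ∧
           TinfCol c (j - 1) (i + 1) = some a)
     | Lab.star =>
         hgt c j ≤ maxHgt c j ∧ i = hgt c j ∧
           (∃ j', 1 ≤ j' ∧ j' < j ∧ hgt c j' = hgt c j) ∧
           TinfCol c (j - 1) i = some a)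

/-- `LineE c a b lab` : `ℓ(D)` contains a line labelled `lab` joining the box of `D`
carrying entry `a` in `T` (on the left) to the box carrying entry `b` (on the right). -/
def LineE (c : List ℕ) (a b : ℕ) (lab : Lab) : Prop :=
  ∃ i j, LineB c a i j lab ∧ b = Tentry c i j

/-- the box `(i, j)` of `D` is right extremal relative to `ℓ(D)`. -/
def RExt (c : List ℕ) (i j : ℕ) : Prop :=
  IsBox c i j ∧ ∀ i' j', ¬ LineB c (Tentry c i j) i' j' Lab.one

/-- `c` is a composition of `n`. -/
def IsComposition (c : List ℕ) (n : ℕ) : Prop :=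
  c.sum = n ∧ ∀ x ∈ c, 0 < x

/-! ### Auxiliary lemmas -/

lemma take_sum_mono (c : List ℕ) {a b : ℕ} (h : a ≤ b) : (c.take a).sum ≤ (c.take b).sum := by
  conv_rhs => rw [← List.take_append_drop a (c.take b)]
  rw [List.sum_append, List.take_take, min_eq_left h]
  exact Nat.le_add_right _ _

lemma sum_take_eq (c : List ℕ) {j : ℕ} (h1 : 1 ≤ j) (h2 : j ≤ c.length) :
    (c.take j).sum = off c j + hgt c j := by
  obtain ⟨k, rfl⟩ : ∃ k, j = k + 1 := ⟨j - 1, (Nat.succ_pred_eq_of_pos h1).symm⟩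
  rw [List.take_succ, List.sum_append]
  unfold off hgt
  have hk : k < c.length := by omega
  simp [List.getElem?_eq_getElem hk, List.getD_eq_getElem?_getD]

lemma hgt_pos (c : List ℕ) (hpos : ∀ x ∈ c, 0 < x) {j : ℕ} (h1 : 1 ≤ j) (h2 : j ≤ c.length) :
    1 ≤ hgt c j := by
  have hk : j - 1 < c.length := by omega
  have := hpos (c.get ⟨j - 1, hk⟩) (List.get_mem _ _)
  unfold hgt
  rwa [List.getD_eq_getElem?_getD, List.getElem?_eq_getElem hk]

lemma take_le_sum (c : List ℕ) {j : ℕ} (h : j ≤ c.length) : (c.take j).sum ≤ c.sum := by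
  calc (c.take j).sum ≤ (c.take c.length).sum := take_sum_mono c h
  _ = c.sum := by rw [List.take_length]

lemma colOf_Tentry (c : List ℕ) {i j : ℕ} (hi1 : 1 ≤ i) (hj1 : 1 ≤ j) (hj2 : j ≤ c.length)
    (hi2 : i ≤ hgt c j) : colOf c (Tentry c i j) = j := by
  have hmem : Tentry c i j ≤ (c.take j).sum := by
    rw [sum_take_eq c hj1 hj2]; unfold Tentry; omega
  unfold colOf
  have h1 : sInf {j' | Tentry c i j ≤ (c.take j').sum} ≤ j := Nat.sInf_le hmem
  have hne' : {j' | Tentry c i j ≤ (c.take j').sum}.Nonempty := ⟨j, hmem⟩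
  have h2 : Tentry c i j ≤ (c.take (sInf {j' | Tentry c i j ≤ (c.take j').sum})).sum :=
    Nat.sInf_mem hne'
  by_contra hne
  have h3 : sInf {j' | Tentry c i j ≤ (c.take j').sum} ≤ j - 1 := by omega
  have h4 := take_sum_mono c h3
  unfold Tentry off at h2 h4 hmem
  omega

lemma propStep_none {c : List ℕ} {j t : ℕ} {prev cur : ℕ → Option ℕ} (h : prev t = none) :
    propStep c j prev cur t = cur := by simp [propStep, h]

lemma propStep_some {c : List ℕ} {j t l : ℕ} {prev cur : ℕ → Option ℕ} (h : prev t = some l) :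
    propStep c j prev cur t =
      if hgt c j = t then
        if HasLeftNb c j ∧ cur (t + 1) = none then Function.update cur (t + 1) (some l)
        else cur
      else if cur t = none then Function.update cur t (some l) else cur := by
  simp [propStep, h]

lemma TinfCol_one (c : List ℕ) : TinfCol c 1 = Tcol c 1 := by rw [TinfCol]

lemma TinfCol_two (c : List ℕ) (k : ℕ) :
    TinfCol c (k + 2) = (List.range (c.sum + 2)).foldl
      (propStep c (k + 2) (TinfCol c (k + 1))) (Tcol c (k + 2)) := by
  rw [TinfCol]

/-- explicit description of a propagated column. -/
noncomputable def Gfun (c : List ℕ) (j m : ℕ) (prev : ℕ → Option ℕ) : ℕ → Option ℕ := fun i =>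
  if 1 ≤ i ∧ i ≤ hgt c j then some (Tentry c i j)
  else if (HasLeftNb c j ∧ hgt c j ≤ m) ∧ i = hgt c j + 1 then prev (hgt c j)
  else prev i

lemma foldl_char (c : List ℕ) (j : ℕ) (prev : ℕ → Option ℕ) (m : ℕ)
    (hH1 : 1 ≤ hgt c j) (hHs : hgt c j ≤ c.sum) (hms : m ≤ c.sum)
    (hprev : ∀ i, (prev i).isSome ↔ 1 ≤ i ∧ i ≤ m) :
    (List.range (c.sum + 2)).foldl (propStep c j prev) (Tcol c j) = Gfun c j m prev := by
  have hpnone : ∀ i, ¬(1 ≤ i ∧ i ≤ m) → prev i = none := by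
    intro i hi
    cases h : prev i with
    | none => rfl
    | some l => exact absurd ((hprev i).1 (by rw [h]; rfl)) hi
  have hpsome : ∀ i, 1 ≤ i → i ≤ m → ∃ l, prev i = some l := by
    intro i h1 h2
    exact Option.isSome_iff_exists.1 ((hprev i).2 ⟨h1, h2⟩)
  have key : ∀ t, t ≤ c.sum + 2 →
      (∀ i, i < t → (List.range t).foldl (propStep c j prev) (Tcol c j) i = Gfun c j m prev i) ∧
      (∀ i, t < i → (List.range t).foldl (propStep c j prev) (Tcol c j) i = Tcol c j i) ∧
      ((List.range t).foldl (propStep c j prev) (Tcol c j) t =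
        if (HasLeftNb c j ∧ hgt c j ≤ m) ∧ t = hgt c j + 1 then Gfun c j m prev t
        else Tcol c j t) := by
    intro t
    induction t with
    | zero =>
      intro _
      refine ⟨fun i hi => absurd hi (by omega), fun i _ => rfl, ?_⟩
      simp only [List.range_zero, List.foldl_nil]
      rw [if_neg (by rintro ⟨_, hh⟩; omega)]
    | succ t ih =>
      intro ht
      obtain ⟨ih1, ih2, ih3⟩ := ih (by omega)
      have hstep : (List.range (t + 1)).foldl (propStep c j prev) (Tcol c j)
          = propStep c j prev ((List.range t).foldl (propStep c j prev) (Tcol c j)) t := by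
        rw [List.range_succ, List.foldl_append, List.foldl_cons, List.foldl_nil]
      rw [hstep]
      set S := (List.range t).foldl (propStep c j prev) (Tcol c j) with hSdef
      cases hpt : prev t with
      | none =>
        have hptm : ¬(1 ≤ t ∧ t ≤ m) := by
          intro h
          obtain ⟨l, hl⟩ := hpsome t h.1 h.2
          rw [hl] at hpt; exact Option.some_ne_none _ hpt
        rw [propStep_none hpt]
        refine ⟨?_, fun i hi => ih2 i (by omega), ?_⟩
        · intro i hi
          rcases Nat.lt_or_ge i t with h | h
          · exact ih1 i h
          · have hit : i = t := by omega
            subst hit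
            rw [ih3]
            split_ifs with hc1
            · rfl
            · show Tcol c j i = Gfun c j m prev i
              unfold Tcol Gfun
              split_ifs with h1
              · rfl
              · exact (hpnone i hptm).symm
        · rw [ih2 (t + 1) (by omega), if_neg ?_]
          rintro ⟨⟨hnb, hHm⟩, hte⟩
          obtain ⟨l, hl⟩ := hpsome t (by omega) (by omega)
          rw [hl] at hpt; exact Option.some_ne_none _ hpt
      | some l =>
        have htm : 1 ≤ t ∧ t ≤ m := (hprev t).1 (by rw [hpt]; rfl)
        rw [propStep_some hpt]
        by_cases hHt : hgt c j = t
        · rw [if_pos hHt]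
          have hSt1 : S (t + 1) = Tcol c j (t + 1) := ih2 (t + 1) (by omega)
          have hTc1 : Tcol c j (t + 1) = none := by
            unfold Tcol; rw [if_neg (by omega)]
          have hSt : S t = Gfun c j m prev t := by
            rw [ih3, if_neg (by rintro ⟨_, hh⟩; omega)]
            unfold Tcol Gfun
            rw [if_pos ⟨htm.1, by omega⟩, if_pos ⟨htm.1, by omega⟩]
          by_cases hnb : HasLeftNb c j
          · rw [if_pos ⟨hnb, by rw [hSt1, hTc1]⟩]
            refine ⟨?_, ?_, ?_⟩
            · intro i hi
              rw [Function.update_of_ne (by omega : i ≠ t + 1)]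
              rcases Nat.lt_or_ge i t with h | h
              · exact ih1 i h
              · have hit : i = t := by omega
                subst hit; exact hSt
            · intro i hi
              rw [Function.update_of_ne (by omega : i ≠ t + 1)]
              exact ih2 i (by omega)
            · rw [Function.update_self, if_pos ⟨⟨hnb, by omega⟩, by omega⟩]
              unfold Gfun
              rw [if_neg (by omega), if_pos ⟨⟨hnb, by omega⟩, by omega⟩, hHt]
              exact hpt.symm
          · rw [if_neg (fun hc => hnb hc.1)]
            refine ⟨?_, fun i hi => ih2 i (by omega), ?_⟩
            · intro i hi
              rcases Nat.lt_or_ge i t with h | h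
              · exact ih1 i h
              · have hit : i = t := by omega
                subst hit; exact hSt
            · rw [hSt1, if_neg ?_]
              rintro ⟨⟨hnb', _⟩, _⟩; exact hnb hnb'
        · rw [if_neg hHt]
          by_cases hsc : (HasLeftNb c j ∧ hgt c j ≤ m) ∧ t = hgt c j + 1
          · have hSt : S t = Gfun c j m prev t := by rw [ih3, if_pos hsc]
            have hGt : ∃ l', Gfun c j m prev t = some l' := by
              unfold Gfun
              rw [if_neg (by omega), if_pos hsc]
              exact hpsome (hgt c j) hH1 hsc.1.2
            obtain ⟨l', hl'⟩ := hGt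
            rw [if_neg (by rw [hSt, hl']; exact Option.some_ne_none _)]
            refine ⟨?_, fun i hi => ih2 i (by omega), ?_⟩
            · intro i hi
              rcases Nat.lt_or_ge i t with h | h
              · exact ih1 i h
              · have hit : i = t := by omega
                subst hit; exact hSt
            · have hts := hsc.2
              rw [ih2 (t + 1) (by omega), if_neg (by rintro ⟨_, hh⟩; omega)]
          · have hSt : S t = Tcol c j t := by rw [ih3, if_neg hsc]
            by_cases htH : t ≤ hgt c j
            · have hTc : Tcol c j t = some (Tentry c t j) := by
                unfold Tcol; rw [if_pos ⟨htm.1, htH⟩]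
              rw [if_neg (by rw [hSt, hTc]; exact Option.some_ne_none _)]
              refine ⟨?_, fun i hi => ih2 i (by omega), ?_⟩
              · intro i hi
                rcases Nat.lt_or_ge i t with h | h
                · exact ih1 i h
                · have hit : i = t := by omega
                  subst hit
                  rw [hSt]
                  unfold Tcol Gfun
                  rw [if_pos ⟨htm.1, htH⟩, if_pos ⟨htm.1, htH⟩]
              · rw [ih2 (t + 1) (by omega), if_neg (by rintro ⟨_, hh⟩; omega)]
            · push_neg at htH
              have hTc : Tcol c j t = none := by unfold Tcol; rw [if_neg (by omega)]
              rw [if_pos (by rw [hSt, hTc])]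
              refine ⟨?_, ?_, ?_⟩
              · intro i hi
                rcases Nat.lt_or_ge i t with h | h
                · rw [Function.update_of_ne (by omega : i ≠ t)]
                  exact ih1 i h
                · have hit : i = t := by omega
                  subst hit
                  rw [Function.update_self]
                  unfold Gfun
                  rw [if_neg (by omega), if_neg hsc]
                  exact hpt.symm
              · intro i hi
                rw [Function.update_of_ne (by omega : i ≠ t)]
                exact ih2 i (by omega)
              · rw [Function.update_of_ne (by omega : t + 1 ≠ t),
                  ih2 (t + 1) (by omega), if_neg (by rintro ⟨_, hh⟩; omega)]
  obtain ⟨k1, k2, k3⟩ := key (c.sum + 2) le_rfl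
  funext i
  rcases Nat.lt_trichotomy i (c.sum + 2) with h | h | h
  · exact k1 i h
  · subst h
    rw [k3, if_neg (by rintro ⟨_, hh⟩; omega)]
    unfold Tcol Gfun
    rw [if_neg (by omega), if_neg (by rintro ⟨_, hh⟩; omega), if_neg (by omega)]
    exact (hpnone _ (by omega)).symm
  · rw [k2 i h]
    unfold Tcol Gfun
    rw [if_neg (by omega), if_neg (by rintro ⟨_, hh⟩; omega), if_neg (by omega)]
    exact (hpnone _ (by omega)).symm

/-- the inductive invariant along the columns of `T(∞)`. -/
def ColInv (c : List ℕ) (j m : ℕ) : Prop :=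
  hgt c j ≤ m ∧ m ≤ (c.take j).sum ∧
  (∀ i, (TinfCol c j i).isSome ↔ 1 ≤ i ∧ i ≤ m) ∧
  (∀ i a, TinfCol c j i = some a → colOf c a ≤ j) ∧
  (∀ i a, hgt c j < i → TinfCol c j i = some a → colOf c a < j) ∧
  (∀ i i' a b, i < i' → TinfCol c j i = some a → TinfCol c j i' = some b → plt c a b) ∧
  (∀ j0, 1 ≤ j0 → j0 ≤ j → ∀ i b, TinfCol c j i = some b →
      j0 < colOf c b ∨ ∃ i0, 1 ≤ i0 ∧ i0 ≤ i ∧ TinfCol c j0 i0 = some b)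

lemma main_inv (c : List ℕ) (hpos : ∀ x ∈ c, 0 < x) :
    ∀ j, 1 ≤ j → j ≤ c.length → ∃ m, ColInv c j m := by
  intro j
  induction j with
  | zero => intro h; omega
  | succ j ih =>
    intro _ hlen
    rcases Nat.eq_zero_or_pos j with rfl | hj
    · -- base case: column 1
      simp only [Nat.zero_add] at hlen ⊢
      refine ⟨hgt c 1, ?_⟩
      unfold ColInv
      refine ⟨le_rfl, ?_, ?_, ?_, ?_, ?_, ?_⟩
      · rw [sum_take_eq c le_rfl hlen]; exact Nat.le_add_left _ _
      · intro i
        rw [TinfCol_one]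
        unfold Tcol
        split_ifs with h1
        · simpa using h1
        · simpa using h1
      · intro i a ha
        rw [TinfCol_one] at ha
        unfold Tcol at ha
        split_ifs at ha with h1
        have := Option.some.inj ha
        rw [← this, colOf_Tentry c h1.1 le_rfl hlen h1.2]
      · intro i a hi ha
        rw [TinfCol_one] at ha
        unfold Tcol at ha
        split_ifs at ha with h1
        omega
      · intro i i' a b hii ha hb
        rw [TinfCol_one] at ha hb
        unfold Tcol at ha hb
        split_ifs at ha with h1
        split_ifs at hb with h2
        have hae := Option.some.inj ha
        have hbe := Option.some.inj hb
        right
        constructor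
        · rw [← hae, ← hbe, colOf_Tentry c h1.1 le_rfl hlen h1.2,
            colOf_Tentry c h2.1 le_rfl hlen h2.2]
        · rw [← hae, ← hbe]
          unfold Tentry
          omega
      · intro j0 hj01 hj0le i b hb
        have hj0 : j0 = 1 := by omega
        subst hj0
        refine Or.inr ⟨i, ?_, le_rfl, hb⟩
        rw [TinfCol_one] at hb
        unfold Tcol at hb
        split_ifs at hb with h1
        exact h1.1
    · -- inductive step
      obtain ⟨k, rfl⟩ : ∃ k, j = k + 1 := ⟨j - 1, by omega⟩
      have hkk : k + 1 + 1 = k + 2 := rfl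
      rw [hkk] at hlen ⊢
      obtain ⟨m', hInv'⟩ := ih (by omega) (by omega)
      unfold ColInv at hInv'
      obtain ⟨hm'1, hm'2, hfull', hcolle', hcollt', hstrict', hdesc'⟩ := hInv'
      have hlen' : k + 1 ≤ c.length := by omega
      have hH1 : 1 ≤ hgt c (k + 2) := hgt_pos c hpos (by omega) hlen
      have hsumtake : (c.take (k + 2)).sum = (c.take (k + 1)).sum + hgt c (k + 2) := by
        rw [sum_take_eq c (by omega) hlen]
        unfold off
        have h22 : k + 2 - 1 = k + 1 := rfl
        rw [h22, Nat.add_comm]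
      have hHs : hgt c (k + 2) ≤ c.sum := by
        have := take_le_sum c hlen
        omega
      have hms : m' ≤ c.sum := le_trans hm'2 (take_le_sum c hlen')
      have hchar : TinfCol c (k + 2) = Gfun c (k + 2) m' (TinfCol c (k + 1)) := by
        rw [TinfCol_two]
        exact foldl_char c (k + 2) (TinfCol c (k + 1)) m' hH1 hHs hms hfull'
      have F1 : ∀ i a, TinfCol c (k + 2) i = some a →
          (1 ≤ i ∧ i ≤ hgt c (k + 2) ∧ a = Tentry c i (k + 2)) ∨
          (hgt c (k + 2) < i ∧ ∃ i1, 1 ≤ i1 ∧ i1 ≤ i ∧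
            (i1 = i ∨ (i1 = hgt c (k + 2) ∧ i = hgt c (k + 2) + 1)) ∧
            TinfCol c (k + 1) i1 = some a) := by
        intro i a h
        rw [hchar] at h
        unfold Gfun at h
        split_ifs at h with h1 h2
        · exact Or.inl ⟨h1.1, h1.2, (Option.some.inj h).symm⟩
        · refine Or.inr ⟨by omega, hgt c (k + 2), hH1, by omega, Or.inr ⟨rfl, h2.2⟩, h⟩
        · have h1i : 1 ≤ i := ((hfull' i).1 (by rw [h]; rfl)).1
          exact Or.inr ⟨by omega, i, h1i, le_rfl, Or.inl rfl, h⟩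
      refine ⟨if HasLeftNb c (k + 2) ∧ hgt c (k + 2) ≤ m' then max (hgt c (k + 2) + 1) m'
        else max (hgt c (k + 2)) m', ?_⟩
      unfold ColInv
      refine ⟨?_, ?_, ?_, ?_, ?_, ?_, ?_⟩
      · split_ifs with hs
        · omega
        · omega
      · split_ifs with hs
        · obtain ⟨hs1, hs2⟩ := hs
          omega
        · omega
      · intro i
        by_cases hs : HasLeftNb c (k + 2) ∧ hgt c (k + 2) ≤ m'
        · rw [if_pos hs, hchar]
          unfold Gfun
          obtain ⟨hs1, hs2⟩ := hs
          split_ifs with h1 h2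
          · simp only [Option.isSome_some]
            constructor
            · intro _; omega
            · intro _; trivial
          · rw [hfull' (hgt c (k + 2))]
            obtain ⟨-, h2b⟩ := h2
            omega
          · rw [hfull' i]
            have hi2 : i ≠ hgt c (k + 2) + 1 := fun hh => h2 ⟨⟨hs1, hs2⟩, hh⟩
            omega
        · rw [if_neg hs, hchar]
          unfold Gfun
          split_ifs with h1 h2
          · simp only [Option.isSome_some]
            constructor
            · intro _; omega
            · intro _; trivial
          · exact absurd h2.1 hs
          · rw [hfull' i]
            omega
      · intro i a ha
        rcases F1 i a ha with ⟨h1, h2, rfl⟩ | ⟨-, i1, -, -, -, hp⟩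
        · have := colOf_Tentry c h1 (by omega) hlen h2
          omega
        · have := hcolle' i1 a hp
          omega
      · intro i a hi ha
        rcases F1 i a ha with ⟨-, h2, -⟩ | ⟨-, i1, -, -, -, hp⟩
        · omega
        · have := hcolle' i1 a hp
          omega
      · intro i i' a b hii ha hb
        rcases F1 i a ha with ⟨ha1, ha2, rfl⟩ | ⟨hgta, i1, hi11, hi1le, hi1d, hpa⟩
        · rcases F1 i' b hb with ⟨hb1, hb2, rfl⟩ | ⟨hgtb, i1', hi1'1, hi1'le, hi1'd, hpb⟩
          · right
            constructor
            · rw [colOf_Tentry c ha1 (by omega) hlen ha2,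
                colOf_Tentry c hb1 (by omega) hlen hb2]
            · unfold Tentry; omega
          · left
            have h1 := hcolle' i1' b hpb
            have h2 := colOf_Tentry c ha1 (by omega) hlen ha2
            omega
        · rcases F1 i' b hb with ⟨hb1, hb2, rfl⟩ | ⟨hgtb, i1', hi1'1, hi1'le, hi1'd, hpb⟩
          · omega
          · have hi1' : i1' = i' := by
              rcases hi1'd with h | h
              · exact h
              · omega
            exact hstrict' i1 i1' a b (by omega) hpa hpb
      · intro j0 hj01 hj0le i b hb
        by_cases hj0 : j0 = k + 2
        · subst hj0
          have h1i : 1 ≤ i := by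
            rcases F1 i b hb with ⟨h1, -, -⟩ | ⟨h1, -⟩
            · exact h1
            · omega
          exact Or.inr ⟨i, h1i, le_rfl, hb⟩
        · rcases F1 i b hb with ⟨h1, h2, rfl⟩ | ⟨-, i1, hi11, hi1le, -, hp⟩
          · left
            have := colOf_Tentry c h1 (by omega) hlen h2
            omega
          · rcases hdesc' j0 hj01 (by omega) i1 b hp with h | ⟨i0, a1, a2, a3⟩
            · exact Or.inl h
            · exact Or.inr ⟨i0, a1, le_trans a2 hi1le, a3⟩

/-- the composition tableau `T(∞)` is semistandard for the order `≼`: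
its entries strictly `≼`-increase down each column, weakly `≼`-decrease along each
row going from left to right, and no column of `T(∞)` contains a gap. -/
theorem statement0 (n : ℕ) (hn : 0 < n) (c : List ℕ) (hc : IsComposition c n) :
    (∀ j i i' a b, 1 ≤ j → j ≤ c.length → 1 ≤ i → i < i' →
        TinfCol c j i = some a → TinfCol c j i' = some b → plt c a b) ∧
    (∀ i j j' a b, 1 ≤ j → j < j' → j' ≤ c.length → 1 ≤ i →
        TinfCol c j i = some a → TinfCol c j' i = some b → ple c b a) ∧
    (∀ j i, 1 ≤ j → j ≤ c.length → 1 ≤ i →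
        TinfCol c j i = none → TinfCol c j (i + 1) = none) := by
  obtain ⟨hsum, hpos⟩ := hc
  have main := main_inv c hpos
  refine ⟨?_, ?_, ?_⟩
  · intro j i i' a b hj1 hj2 hi1 hii ha hb
    obtain ⟨m, hInv⟩ := main j hj1 hj2
    unfold ColInv at hInv
    obtain ⟨-, -, -, -, -, hstrict, -⟩ := hInv
    exact hstrict i i' a b hii ha hb
  · intro i j j' a b hj1 hjj hj'le hi1 ha hb
    obtain ⟨m, hInvj⟩ := main j hj1 (by omega)
    unfold ColInv at hInvj
    obtain ⟨-, -, -, hcolle, -, hstrict, -⟩ := hInvj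
    obtain ⟨m2, hInvj'⟩ := main j' (by omega) hj'le
    unfold ColInv at hInvj'
    obtain ⟨-, -, -, -, -, -, hdesc⟩ := hInvj'
    unfold ple
    rcases hdesc j hj1 (by omega) i b hb with h | ⟨i0, h1, h2, hp⟩
    · left
      have := hcolle i a ha
      omega
    · rcases Nat.lt_or_ge i0 i with h3 | h3
      · have hplt := hstrict i0 i b a h3 hp ha
        unfold plt at hplt
        rcases hplt with h | ⟨h4, h5⟩
        · exact Or.inl h
        · exact Or.inr ⟨h4, by omega⟩
      · have hi0 : i0 = i := by omega
        subst hi0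
        rw [ha] at hp
        have hab := Option.some.inj hp
        subst hab
        exact Or.inr ⟨rfl, le_rfl⟩
  · intro j i hj1 hj2 h1i hnone
    obtain ⟨m, hInv⟩ := main j hj1 hj2
    unfold ColInv at hInv
    obtain ⟨-, -, hfull, -⟩ := hInv
    have him : ¬(1 ≤ i ∧ i ≤ m) := by
      intro h
      have := (hfull i).2 h
      rw [hnone] at this
      simp at this
    cases h2 : TinfCol c j (i + 1) with
    | none => rfl
    | some x =>
      have := (hfull (i + 1)).1 (by rw [h2]; rfl)
      omega
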